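/- Let n ≥ 3, let α be an integer with 1 ≤ α ≤ n−2, and set p = α/(n−1). Then: (i) the maximum of P_θ(∑_{i=1}^n c_i ≥ α+1) over all pairwise independent distributions θ with identical marginal probability p equals n·p / ( n·p + 1 − p ); and (ii) the maximum of P_θ(∑_{i=1}^n c_i ≥ n) over all such distributions equals p / ( p + n·(1−p) ). In both cases the maximum coincides with the one-sided Chebyshev bound n·p·(1−p) / ( n·p·(1−p) + (k − n·p)^2 ) at k = α+1 and k = n respectively. -/

import Mathlib

open Finset

noncomputable section

/-- Probability that at least `k` of the `n` coordinates equal `1` under the pmf `θ` on `{0,1}^n`. -/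
def probGE (n : ℕ) (θ : (Fin n → Bool) → ℝ) (k : ℕ) : ℝ :=
  ∑ c ∈ Finset.univ.filter
      (fun c : Fin n → Bool => k ≤ (Finset.univ.filter (fun i => c i = true)).card), θ c

/-- Probability that all `n` coordinates equal `1` under the pmf `θ` on `{0,1}^n`. -/
def probAll (n : ℕ) (θ : (Fin n → Bool) → ℝ) : ℝ :=
  ∑ c ∈ Finset.univ.filter (fun c : Fin n → Bool => ∀ i, c i = true), θ c

/-- `θ` is a probability mass function on `{0,1}^n`. -/
def IsDist (n : ℕ) (θ : (Fin n → Bool) → ℝ) : Prop :=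
  (∀ c, 0 ≤ θ c) ∧ (∑ c, θ c = 1)

/-- Univariate marginal probability `P_θ(c_i = 1)`. -/
def Marg (n : ℕ) (θ : (Fin n → Bool) → ℝ) (i : Fin n) : ℝ :=
  ∑ c ∈ Finset.univ.filter (fun c : Fin n → Bool => c i = true), θ c

/-- Bivariate probability `P_θ(c_i = 1, c_j = 1)`. -/
def Biv (n : ℕ) (θ : (Fin n → Bool) → ℝ) (i j : Fin n) : ℝ :=
  ∑ c ∈ Finset.univ.filter (fun c : Fin n → Bool => c i = true ∧ c j = true), θ c

/-- `θ` is a pairwise independent distribution with marginal vector `p`. -/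
def PairwiseIndep (n : ℕ) (p : Fin n → ℝ) (θ : (Fin n → Bool) → ℝ) : Prop :=
  IsDist n θ ∧ (∀ i, Marg n θ i = p i) ∧
    (∀ i j : Fin n, i < j → Biv n θ i j = p i * p j)

def cnt {n : ℕ} (c : Fin n → Bool) : ℕ := (Finset.univ.filter (fun i => c i = true)).card


lemma count_with {n : ℕ} (s : Finset (Fin n)) (m : ℕ) (h : s.card ≤ m) :
    ((univ : Finset (Fin n → Bool)).filter (fun c => cnt c = m ∧ ∀ i ∈ s, c i = true)).card
      = (n - s.card).choose (m - s.card) := by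
  have hc : (n - s.card).choose (m - s.card) = (Finset.powersetCard (m - s.card) sᶜ).card := by
    rw [Finset.card_powersetCard, Finset.card_compl, Fintype.card_fin]
  rw [hc]
  apply Finset.card_bij' (fun c _ => (univ.filter (fun i => c i = true)) \ s)
    (fun t _ => fun i => decide (i ∈ t ∪ s))
  · intro c hc
    simp only [mem_filter, mem_univ, true_and] at hc
    obtain ⟨h1, h2⟩ := hc
    have hsub : s ⊆ univ.filter (fun i => c i = true) := by
      intro i hi; simp [h2 i hi]
    rw [Finset.mem_powersetCard]
    constructor
    · intro i hi
      simp only [mem_sdiff] at hi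
      simp [hi.2]
    · rw [Finset.card_sdiff_of_subset hsub]
      rw [show (univ.filter (fun i => c i = true)).card = m from h1]
  · intro t ht
    rw [Finset.mem_powersetCard] at ht
    simp only [mem_filter, mem_univ, true_and]
    constructor
    · have : (univ.filter (fun i => decide (i ∈ t ∪ s) = true)) = t ∪ s := by
        ext i; simp
      rw [cnt, this, Finset.card_union_of_disjoint, ht.2, Nat.sub_add_cancel h]
      exact Finset.disjoint_left.mpr (fun i hi => by
        have := ht.1 hi; simp only [Finset.mem_compl] at this; exact this)
    · intro i hi; simp [hi]
  · intro c hc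
    simp only [mem_filter, mem_univ, true_and] at hc
    funext i
    have : ((univ.filter (fun j => c j = true)) \ s) ∪ s = univ.filter (fun j => c j = true) := by
      apply Finset.sdiff_union_of_subset
      intro j hj; simp [hc.2 j hj]
    simp only [this]
    simp [Finset.mem_filter]
  · intro t ht
    rw [Finset.mem_powersetCard] at ht
    have hdisj : Disjoint t s := Finset.disjoint_left.mpr (fun i hi => by
      have := ht.1 hi; simp only [Finset.mem_compl] at this; exact this)
    have : (univ.filter (fun i => decide (i ∈ t ∪ s) = true)) = t ∪ s := by ext i; simp
    rw [this, Finset.union_sdiff_cancel_right hdisj]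

lemma card_level (n m : ℕ) :
    ((univ : Finset (Fin n → Bool)).filter (fun c => cnt c = m)).card = n.choose m := by
  have := count_with (∅ : Finset (Fin n)) m (by simp)
  simpa using this

lemma card_one (n : ℕ) (i : Fin n) (m : ℕ) (hm : 1 ≤ m) :
    ((univ : Finset (Fin n → Bool)).filter (fun c => c i = true ∧ cnt c = m)).card
      = (n - 1).choose (m - 1) := by
  have := count_with ({i} : Finset (Fin n)) m (by simpa using hm)
  simp only [Finset.card_singleton, Finset.mem_singleton] at this
  rw [← this]
  congr 1
  ext c
  simp [and_comm]

lemma card_two (n : ℕ) (i j : Fin n) (hij : i ≠ j) (m : ℕ) (hm : 2 ≤ m) :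
    ((univ : Finset (Fin n → Bool)).filter (fun c => (c i = true ∧ c j = true) ∧ cnt c = m)).card
      = (n - 2).choose (m - 2) := by
  have hcard : ({i, j} : Finset (Fin n)).card = 2 := by
    rw [Finset.card_insert_of_notMem (by simpa using hij), Finset.card_singleton]
  have := count_with ({i, j} : Finset (Fin n)) m (by rw [hcard]; exact hm)
  rw [hcard] at this
  rw [← this]
  congr 1
  ext c
  simp only [mem_filter, mem_univ, true_and, Finset.mem_insert, Finset.mem_singleton]
  constructor
  · rintro ⟨⟨h1, h2⟩, h3⟩
    exact ⟨h3, fun k hk => by rcases hk with rfl | rfl <;> assumption⟩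
  · rintro ⟨h3, h⟩
    exact ⟨⟨h i (Or.inl rfl), h j (Or.inr rfl)⟩, h3⟩

lemma cnt_ge_of_mem {n : ℕ} {c : Fin n → Bool} {s : Finset (Fin n)}
    (h : ∀ i ∈ s, c i = true) : s.card ≤ cnt c := by
  apply Finset.card_le_card
  intro i hi
  simp [h i hi]

lemma card_one_real (n : ℕ) (i : Fin n) (m : ℕ) (hm : m ≤ n) :
    (((univ : Finset (Fin n → Bool)).filter (fun c => c i = true ∧ cnt c = m)).card : ℝ)
      = (n.choose m : ℝ) * m / n := by
  rcases Nat.eq_zero_or_pos m with rfl | hm1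
  · have : ((univ : Finset (Fin n → Bool)).filter (fun c => c i = true ∧ cnt c = 0)) = ∅ := by
      ext c
      simp only [mem_filter, mem_univ, true_and, Finset.notMem_empty, iff_false]
      rintro ⟨h1, h2⟩
      have : ({i} : Finset (Fin n)).card ≤ cnt c := cnt_ge_of_mem (by simpa using h1)
      simp [h2] at this
    simp [this]
  · rw [card_one n i m hm1]
    have hn : 1 ≤ n := le_trans hm1 hm
    have key : n * (n - 1).choose (m - 1) = n.choose m * m := by
      have := Nat.add_one_mul_choose_eq (n - 1) (m - 1)
      simp only [Nat.succ_eq_add_one, Nat.sub_add_cancel hn, Nat.sub_add_cancel hm1] at this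
      exact this
    have hn0 : (n : ℝ) ≠ 0 := Nat.cast_ne_zero.mpr (by omega)
    have hcast : ((n:ℝ)) * ((n - 1).choose (m - 1) : ℝ) = (n.choose m : ℝ) * m := by
      exact_mod_cast congrArg (Nat.cast : ℕ → ℝ) key
    field_simp
    linarith [hcast]

lemma card_two_real (n : ℕ) (i j : Fin n) (hij : i ≠ j) (m : ℕ) (hm : m ≤ n) :
    (((univ : Finset (Fin n → Bool)).filter
        (fun c => (c i = true ∧ c j = true) ∧ cnt c = m)).card : ℝ)
      = (n.choose m : ℝ) * m * ((m : ℝ) - 1) / ((n : ℝ) * ((n : ℝ) - 1)) := by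
  rcases lt_or_ge m 2 with hm2 | hm2
  · have hempty : ((univ : Finset (Fin n → Bool)).filter
        (fun c => (c i = true ∧ c j = true) ∧ cnt c = m)) = ∅ := by
      ext c
      simp only [mem_filter, mem_univ, true_and, Finset.notMem_empty, iff_false]
      rintro ⟨⟨h1, h2⟩, h3⟩
      have hsub : ∀ k ∈ ({i, j} : Finset (Fin n)), c k = true := by
        intro k hk
        rcases Finset.mem_insert.mp hk with rfl | hk
        · exact h1
        · rw [Finset.mem_singleton] at hk; subst hk; exact h2
      have hc2 : ({i, j} : Finset (Fin n)).card = 2 := by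
        rw [Finset.card_insert_of_notMem (by simpa using hij), Finset.card_singleton]
      have := cnt_ge_of_mem hsub
      omega
    rw [hempty]
    interval_cases m <;> simp
  · rw [card_two n i j hij m hm2]
    have hn : 2 ≤ n := le_trans hm2 hm
    have k1 : (n - 1) * (n - 2).choose (m - 2) = (n - 1).choose (m - 1) * (m - 1) := by
      have := Nat.add_one_mul_choose_eq (n - 2) (m - 2)
      simp only [Nat.succ_eq_add_one, show n - 2 + 1 = n - 1 by omega,
        show m - 2 + 1 = m - 1 by omega] at this
      exact this
    have k2 : n * (n - 1).choose (m - 1) = n.choose m * m := by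
      have := Nat.add_one_mul_choose_eq (n - 1) (m - 1)
      simp only [Nat.succ_eq_add_one, Nat.sub_add_cancel (show 1 ≤ n by omega),
        Nat.sub_add_cancel (show 1 ≤ m by omega)] at this
      exact this
    have key : n * (n - 1) * (n - 2).choose (m - 2) = n.choose m * m * (m - 1) := by
      calc n * (n - 1) * (n - 2).choose (m - 2) = n * ((n - 1) * (n - 2).choose (m - 2)) := by ring
        _ = n * ((n - 1).choose (m - 1) * (m - 1)) := by rw [k1]
        _ = n * (n - 1).choose (m - 1) * (m - 1) := by ring
        _ = n.choose m * m * (m - 1) := by rw [k2]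
    have hn0 : (n : ℝ) ≠ 0 := Nat.cast_ne_zero.mpr (by omega)
    have hn1 : (n : ℝ) - 1 ≠ 0 := by
      have : (2 : ℝ) ≤ (n : ℝ) := by exact_mod_cast hn
      linarith
    have hcast : ((n : ℝ)) * ((n : ℝ) - 1) * ((n - 2).choose (m - 2) : ℝ)
        = (n.choose m : ℝ) * m * ((m : ℝ) - 1) := by
      have := congrArg (Nat.cast : ℕ → ℝ) key
      push_cast [Nat.cast_sub (show 1 ≤ n by omega), Nat.cast_sub (show 1 ≤ m by omega)] at this
      linarith [this]
    field_simp
    linarith [hcast]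


lemma sum_lvl2 {n : ℕ} (m₁ m₂ : ℕ) (x y : ℝ) (Q : (Fin n → Bool) → Prop) [DecidablePred Q] :
    ∑ c ∈ (univ : Finset (Fin n → Bool)).filter Q,
      ((if cnt c = m₁ then x else 0) + (if cnt c = m₂ then y else 0))
    = x * ((univ : Finset (Fin n → Bool)).filter (fun c => Q c ∧ cnt c = m₁)).card
      + y * ((univ : Finset (Fin n → Bool)).filter (fun c => Q c ∧ cnt c = m₂)).card := by
  rw [Finset.sum_add_distrib]
  congr 1
  · rw [← Finset.sum_filter, Finset.filter_filter, Finset.sum_const, nsmul_eq_mul, mul_comm]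
  · rw [← Finset.sum_filter, Finset.filter_filter, Finset.sum_const, nsmul_eq_mul, mul_comm]

lemma sum_lvl2_univ {n : ℕ} (m₁ m₂ : ℕ) (x y : ℝ) :
    ∑ c : Fin n → Bool,
      ((if cnt c = m₁ then x else 0) + (if cnt c = m₂ then y else 0))
    = x * ((univ : Finset (Fin n → Bool)).filter (fun c => cnt c = m₁)).card
      + y * ((univ : Finset (Fin n → Bool)).filter (fun c => cnt c = m₂)).card := by
  have := sum_lvl2 (n := n) m₁ m₂ x y (fun _ => True)
  simpa using this



lemma cnt_cast {n : ℕ} (c : Fin n → Bool) :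
    (cnt c : ℝ) = ∑ i : Fin n, (if c i = true then (1 : ℝ) else 0) := by
  rw [cnt, Finset.card_filter]
  push_cast
  rfl

lemma biv_symm (n : ℕ) (θ : (Fin n → Bool) → ℝ) (i j : Fin n) :
    Biv n θ i j = Biv n θ j i := by
  unfold Biv
  congr 1
  ext c
  simp [and_comm]

lemma moment1 {n : ℕ} {p : ℝ} {θ : (Fin n → Bool) → ℝ}
    (h : PairwiseIndep n (fun _ => p) θ) :
    ∑ c : Fin n → Bool, θ c * (cnt c : ℝ) = n * p := by
  have : ∀ c : Fin n → Bool, θ c * (cnt c : ℝ)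
      = ∑ i : Fin n, (if c i = true then θ c else 0) := by
    intro c
    rw [cnt_cast, Finset.mul_sum]
    exact Finset.sum_congr rfl fun i _ => by split <;> simp
  rw [Finset.sum_congr rfl fun c _ => this c, Finset.sum_comm]
  have : ∀ i : Fin n, ∑ c : Fin n → Bool, (if c i = true then θ c else 0) = p := by
    intro i
    rw [← Finset.sum_filter]
    exact h.2.1 i
  rw [Finset.sum_congr rfl fun i _ => this i]
  simp [mul_comm]

lemma moment2 {n : ℕ} {p : ℝ} {θ : (Fin n → Bool) → ℝ}
    (h : PairwiseIndep n (fun _ => p) θ) :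
    ∑ c : Fin n → Bool, θ c * (cnt c : ℝ) ^ 2 = n * p + n * (n - 1) * p ^ 2 := by
  have hbiv : ∀ i j : Fin n, i ≠ j → Biv n θ i j = p ^ 2 := by
    intro i j hij
    rcases lt_or_gt_of_ne hij with hlt | hgt
    · rw [h.2.2 i j hlt]; ring
    · rw [biv_symm, h.2.2 j i hgt]; ring
  have key : ∀ c : Fin n → Bool, θ c * (cnt c : ℝ) ^ 2
      = ∑ i : Fin n, ∑ j : Fin n, (if c i = true ∧ c j = true then θ c else 0) := by
    intro c
    rw [cnt_cast, sq, Finset.sum_mul_sum, Finset.mul_sum]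
    refine Finset.sum_congr rfl fun i _ => ?_
    rw [Finset.mul_sum]
    refine Finset.sum_congr rfl fun j _ => ?_
    by_cases h1 : c i = true <;> by_cases h2 : c j = true <;> simp [h1, h2]
  rw [Finset.sum_congr rfl fun c _ => key c, Finset.sum_comm]
  have inner : ∀ i : Fin n,
      ∑ j : Fin n, ∑ c : Fin n → Bool, (if c i = true ∧ c j = true then θ c else 0)
      = p + ((n : ℝ) - 1) * p ^ 2 := by
    intro i
    have hterm : ∀ j : Fin n,
        ∑ c : Fin n → Bool, (if c i = true ∧ c j = true then θ c else 0)
        = if i = j then p else p ^ 2 := by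
      intro j
      rw [← Finset.sum_filter]
      by_cases hij : i = j
      · subst hij
        simp only [and_self, if_true]
        exact h.2.1 i
      · rw [if_neg hij]
        exact hbiv i j hij
    rw [Finset.sum_congr rfl fun j _ => hterm j]
    have : ∀ j : Fin n, (if i = j then p else p ^ 2)
        = p ^ 2 + (if i = j then p - p ^ 2 else 0) := by
      intro j; split <;> ring
    rw [Finset.sum_congr rfl fun j _ => this j, Finset.sum_add_distrib,
      Finset.sum_const, Finset.sum_ite_eq, if_pos (Finset.mem_univ i)]
    simp [Finset.card_univ]
    ring
  rw [Finset.sum_congr rfl fun i _ => Finset.sum_comm]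
  rw [Finset.sum_congr rfl fun i _ => inner i]
  simp [Finset.card_univ]
  ring

lemma cheb {n : ℕ} {θ : (Fin n → Bool) → ℝ} (hd : IsDist n θ) (k : ℕ) (a : ℝ)
    (ha : a < k) :
    probGE n θ k ≤ (∑ c : Fin n → Bool, θ c * ((cnt c : ℝ) - a) ^ 2) / ((k : ℝ) - a) ^ 2 := by
  have hka : (0 : ℝ) < (k : ℝ) - a := by linarith
  rw [probGE, Finset.sum_div]
  have step1 : ∑ c ∈ Finset.univ.filter
      (fun c : Fin n → Bool => k ≤ (Finset.univ.filter (fun i => c i = true)).card), θ c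
      ≤ ∑ c ∈ Finset.univ.filter
        (fun c : Fin n → Bool => k ≤ (Finset.univ.filter (fun i => c i = true)).card),
        θ c * ((cnt c : ℝ) - a) ^ 2 / ((k : ℝ) - a) ^ 2 := by
    apply Finset.sum_le_sum
    intro c hc
    simp only [mem_filter, mem_univ, true_and] at hc
    have hcnt : (k : ℝ) ≤ (cnt c : ℝ) := by exact_mod_cast hc
    have h1 : ((k : ℝ) - a) ^ 2 ≤ ((cnt c : ℝ) - a) ^ 2 := by nlinarith
    rw [mul_div_assoc]
    nth_rewrite 1 [← mul_one (θ c)]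
    apply mul_le_mul_of_nonneg_left _ (hd.1 c)
    rw [le_div_iff₀ (by positivity)]
    linarith
  refine le_trans step1 ?_
  have step2 : ∑ c ∈ Finset.univ.filter
      (fun c : Fin n → Bool => k ≤ (Finset.univ.filter (fun i => c i = true)).card),
        θ c * ((cnt c : ℝ) - a) ^ 2 / ((k : ℝ) - a) ^ 2
      ≤ ∑ c : Fin n → Bool, θ c * ((cnt c : ℝ) - a) ^ 2 / ((k : ℝ) - a) ^ 2 := by
    apply Finset.sum_le_sum_of_subset_of_nonneg (Finset.filter_subset _ _)
    intro c _ _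
    have := hd.1 c
    positivity
  exact step2

lemma card_ge_level (n k m : ℕ) :
    ((univ : Finset (Fin n → Bool)).filter
      (fun c => k ≤ (Finset.univ.filter (fun i => c i = true)).card ∧ cnt c = m)).card
    = if k ≤ m then n.choose m else 0 := by
  split
  · rename_i h
    rw [← card_level n m]
    apply congrArg Finset.card
    ext c
    simp only [mem_filter, mem_univ, true_and]
    constructor
    · exact And.right
    · intro hc; exact ⟨(hc ▸ h : k ≤ cnt c), hc⟩
  · rename_i h
    rw [Finset.card_eq_zero, Finset.filter_eq_empty_iff]
    intro c _
    simp only [cnt, not_and]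
    intro hk hc
    omega

lemma pi_of_lvl2 (n m₁ m₂ : ℕ) (x y : ℝ) (p : ℝ) (hm₁ : m₁ ≤ n) (hm₂ : m₂ ≤ n)
    (hx : 0 ≤ x) (hy : 0 ≤ y)
    (hsum : x * (n.choose m₁ : ℝ) + y * (n.choose m₂ : ℝ) = 1)
    (hmarg : x * ((n.choose m₁ : ℝ) * m₁ / n) + y * ((n.choose m₂ : ℝ) * m₂ / n) = p)
    (hbiv : x * ((n.choose m₁ : ℝ) * m₁ * ((m₁ : ℝ) - 1) / ((n : ℝ) * ((n : ℝ) - 1)))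
        + y * ((n.choose m₂ : ℝ) * m₂ * ((m₂ : ℝ) - 1) / ((n : ℝ) * ((n : ℝ) - 1))) = p * p) :
    PairwiseIndep n (fun _ => p)
      (fun c => (if cnt c = m₁ then x else 0) + (if cnt c = m₂ then y else 0)) := by
  have hnn : ∀ c : Fin n → Bool,
      (0:ℝ) ≤ (if cnt c = m₁ then x else 0) + (if cnt c = m₂ then y else 0) := by
    intro c
    apply add_nonneg
    · split
      · exact hx
      · exact le_rfl
    · split
      · exact hy
      · exact le_rfl
  refine ⟨⟨hnn, ?_⟩, ?_, ?_⟩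
  · rw [sum_lvl2_univ, card_level, card_level]
    exact hsum
  · intro i
    rw [Marg, sum_lvl2, card_one_real n i m₁ hm₁, card_one_real n i m₂ hm₂]
    exact hmarg
  · intro i j hij
    have hne : i ≠ j := ne_of_lt hij
    rw [Biv, sum_lvl2, card_two_real n i j hne m₁ hm₁, card_two_real n i j hne m₂ hm₂]
    exact hbiv

lemma probGE_lvl2 (n k m₁ m₂ : ℕ) (x y : ℝ) :
    probGE n (fun c => (if cnt c = m₁ then x else 0) + (if cnt c = m₂ then y else 0)) k
    = (if k ≤ m₁ then x * (n.choose m₁ : ℝ) else 0)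
      + (if k ≤ m₂ then y * (n.choose m₂ : ℝ) else 0) := by
  rw [probGE, sum_lvl2, card_ge_level, card_ge_level]
  split <;> split <;> simp

set_option maxHeartbeats 2000000 in
theorem stmt_16 (n α : ℕ) (hn : 3 ≤ n) (hα1 : 1 ≤ α) (hα2 : α ≤ n - 2)
    (p : ℝ) (hp : p = (α : ℝ) / ((n : ℝ) - 1)) :
    IsGreatest
      {x : ℝ | ∃ θ : (Fin n → Bool) → ℝ,
        PairwiseIndep n (fun _ => p) θ ∧ probGE n θ (α + 1) = x}
      ((n : ℝ) * p / ((n : ℝ) * p + 1 - p)) ∧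
    IsGreatest
      {x : ℝ | ∃ θ : (Fin n → Bool) → ℝ,
        PairwiseIndep n (fun _ => p) θ ∧ probGE n θ n = x}
      (p / (p + (n : ℝ) * (1 - p))) ∧
    (n : ℝ) * p / ((n : ℝ) * p + 1 - p) =
      (n : ℝ) * p * (1 - p) /
        ((n : ℝ) * p * (1 - p) + (((α : ℝ) + 1) - (n : ℝ) * p) ^ 2) ∧
    p / (p + (n : ℝ) * (1 - p)) =
      (n : ℝ) * p * (1 - p) /
        ((n : ℝ) * p * (1 - p) + ((n : ℝ) - (n : ℝ) * p) ^ 2) := by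
  subst hp
  have hα2' : α + 2 ≤ n := by omega
  have hN3 : (3 : ℝ) ≤ (n : ℝ) := by exact_mod_cast hn
  have hA1 : (1 : ℝ) ≤ (α : ℝ) := by exact_mod_cast hα1
  have hA2 : (α : ℝ) + 2 ≤ (n : ℝ) := by exact_mod_cast hα2'
  have hN1 : (0 : ℝ) < (n : ℝ) - 1 := by linarith
  have hN1' : (n : ℝ) - 1 ≠ 0 := ne_of_gt hN1
  have hN0 : (0 : ℝ) < (n : ℝ) := by linarith
  have hN0' : (n : ℝ) ≠ 0 := ne_of_gt hN0
  have hNA : (0 : ℝ) < (n : ℝ) - (α : ℝ) := by linarith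
  have hNA' : (n : ℝ) - (α : ℝ) ≠ 0 := ne_of_gt hNA
  have hNA1 : (0 : ℝ) < (n : ℝ) - 1 - (α : ℝ) := by linarith
  have hA0 : (0 : ℝ) < (α : ℝ) := by linarith
  have hA10 : (0 : ℝ) < (α : ℝ) + 1 := by linarith
  have hA10' : (α : ℝ) + 1 ≠ 0 := ne_of_gt hA10
  set N : ℝ := (n : ℝ) with hNdef
  set A : ℝ := (α : ℝ) with hAdef
  set q : ℝ := A / (N - 1) with hqdef
  have hq0 : 0 < q := div_pos hA0 hN1
  have hq1 : q < 1 := by rw [hqdef, div_lt_one hN1]; linarith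
  -- the two target values, in simplified form
  have hden1 : N * q + 1 - q = A + 1 := by
    rw [hqdef]; field_simp; ring
  have hNq : N * q = N * A / (N - 1) := by rw [hqdef]; ring
  have hTgt1 : N * q / (N * q + 1 - q) = N * A / ((N - 1) * (A + 1)) := by
    rw [hden1, hNq, div_div]
  have hden2 : q + N * (1 - q) = (N - 1) * (N - A) / (N - 1) := by
    rw [hqdef]; field_simp; ring
  have hTgt2 : q / (q + N * (1 - q)) = A / ((N - 1) * (N - A)) := by
    rw [hden2, hqdef]
    field_simp
  -- choose positivity
  have hCn1 : (0 : ℝ) < (n.choose (α + 1) : ℝ) := by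
    exact_mod_cast Nat.choose_pos (show α + 1 ≤ n by omega)
  have hCn1' : (n.choose (α + 1) : ℝ) ≠ 0 := ne_of_gt hCn1
  have hCnα : (0 : ℝ) < (n.choose α : ℝ) := by
    exact_mod_cast Nat.choose_pos (show α ≤ n by omega)
  have hCnα' : (n.choose α : ℝ) ≠ 0 := ne_of_gt hCnα
  -- first extremal distribution
  set T1 : ℝ := N * A / ((N - 1) * (A + 1)) with hT1def
  have hT1pos : 0 < T1 := by
    apply div_pos (by nlinarith) (by nlinarith)
  have hT1le : T1 ≤ 1 := by
    rw [hT1def, div_le_one (by nlinarith)]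
    nlinarith
  set x1 : ℝ := T1 / (n.choose (α + 1) : ℝ) with hx1def
  set y1 : ℝ := 1 - T1 with hy1def
  have hpi1 : PairwiseIndep n (fun _ => q)
      (fun c => (if cnt c = α + 1 then x1 else 0) + (if cnt c = 0 then y1 else 0)) := by
    refine pi_of_lvl2 n (α + 1) 0 x1 y1 q (by omega) (by omega)
      (le_of_lt (div_pos hT1pos hCn1)) (by rw [hy1def]; linarith) ?_ ?_ ?_ <;>
    · simp only [hx1def, hT1def, hy1def, hqdef, Nat.choose_zero_right]
      push_cast
      simp -failIfUnchanged only [← hNdef, ← hAdef]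
      generalize hg : ((n.choose (α + 1) : ℕ) : ℝ) = C
      have hC : C ≠ 0 := hg ▸ hCn1'
      field_simp [hN1', hA10', hN0', hC]
      ring
  have hge1 : probGE n
      (fun c => (if cnt c = α + 1 then x1 else 0) + (if cnt c = 0 then y1 else 0)) (α + 1)
      = T1 := by
    rw [probGE_lvl2, if_pos le_rfl, if_neg (by omega), add_zero, hx1def,
      div_mul_cancel₀ _ hCn1']
  -- second extremal distribution
  set T2 : ℝ := A / ((N - 1) * (N - A)) with hT2def
  set Q2 : ℝ := N * (N - A - 1) / ((N - 1) * (N - A)) with hQ2def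
  set x2 : ℝ := Q2 / (n.choose α : ℝ) with hx2def
  have hQ2pos : 0 ≤ Q2 := by
    apply div_nonneg (by nlinarith) (by nlinarith)
  have hT2pos : 0 < T2 := by
    apply div_pos hA0 (by nlinarith)
  have hpi2 : PairwiseIndep n (fun _ => q)
      (fun c => (if cnt c = α then x2 else 0) + (if cnt c = n then T2 else 0)) := by
    refine pi_of_lvl2 n α n x2 T2 q (by omega) le_rfl
      (div_nonneg hQ2pos (le_of_lt hCnα)) (le_of_lt hT2pos) ?_ ?_ ?_ <;>
    · simp only [hx2def, hQ2def, hT2def, hqdef, Nat.choose_self]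
      push_cast
      simp -failIfUnchanged only [← hNdef, ← hAdef]
      generalize hg : ((n.choose α : ℕ) : ℝ) = C
      have hC : C ≠ 0 := hg ▸ hCnα'
      field_simp [hN1', hNA', hN0', hC]
      ring
  have hge2 : probGE n
      (fun c => (if cnt c = α then x2 else 0) + (if cnt c = n then T2 else 0)) n
      = T2 := by
    rw [probGE_lvl2, if_neg (by omega), if_pos le_rfl, zero_add, Nat.choose_self]
    push_cast
    ring
  -- upper bounds
  have hub1 : ∀ x ∈ {x : ℝ | ∃ θ : (Fin n → Bool) → ℝ,
      PairwiseIndep n (fun _ => q) θ ∧ probGE n θ (α + 1) = x}, x ≤ T1 := by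
    rintro x ⟨θ, hθ, rfl⟩
    have hstep := cheb (n := n) (θ := θ) hθ.1 (α + 1) 0
      (by push_cast; linarith)
    refine le_trans hstep ?_
    have hs : ∑ c : Fin n → Bool, θ c * ((cnt c : ℝ) - 0) ^ 2
        = N * q + N * (N - 1) * q ^ 2 := by
      rw [← moment2 hθ]
      exact Finset.sum_congr rfl fun c _ => by ring
    rw [hs]
    apply le_of_eq
    rw [hT1def, hqdef]
    push_cast
    field_simp [hN1', hA10', hNA', hN0', hCn1', hCnα']
    ring
  have hub2 : ∀ x ∈ {x : ℝ | ∃ θ : (Fin n → Bool) → ℝ,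
      PairwiseIndep n (fun _ => q) θ ∧ probGE n θ n = x}, x ≤ T2 := by
    rintro x ⟨θ, hθ, rfl⟩
    have hstep := cheb (n := n) (θ := θ) hθ.1 n A (by rw [hAdef, hNdef] at *; linarith)
    refine le_trans hstep ?_
    have hs : ∑ c : Fin n → Bool, θ c * ((cnt c : ℝ) - A) ^ 2
        = (N * q + N * (N - 1) * q ^ 2) - 2 * A * (N * q) + A ^ 2 * 1 := by
      rw [← moment2 hθ, ← moment1 hθ, ← hθ.1.2]
      rw [Finset.mul_sum, Finset.mul_sum, ← Finset.sum_sub_distrib, ← Finset.sum_add_distrib]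
      exact Finset.sum_congr rfl fun c _ => by ring
    rw [hs]
    apply le_of_eq
    rw [hT2def, hqdef]
    push_cast
    simp -failIfUnchanged only [← hNdef, ← hAdef]
    field_simp [hN1', hA10', hNA', hN0', hCn1', hCnα']
    ring
  have hNA1' : N - 1 - A ≠ 0 := ne_of_gt hNA1
  have hnum : N * q * (1 - q) = N * A * (N - 1 - A) / (N - 1) ^ 2 := by
    rw [hqdef]; field_simp [hN1']
  have hd1 : N * q * (1 - q) + ((A + 1) - N * q) ^ 2 = (N - 1 - A) * (A + 1) / (N - 1) := by
    rw [hqdef]; field_simp [hN1']; ring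
  have hd2 : N * q * (1 - q) + (N - N * q) ^ 2 = N * (N - 1 - A) * (N - A) / (N - 1) := by
    rw [hqdef]; field_simp [hN1']; ring
  refine ⟨⟨⟨_, hpi1, hge1.trans hTgt1.symm⟩, by rw [hTgt1]; exact hub1⟩,
    ⟨⟨_, hpi2, hge2.trans hTgt2.symm⟩, by rw [hTgt2]; exact hub2⟩, ?_, ?_⟩
  · rw [hTgt1, hd1, hnum, hT1def]
    rw [div_div_div_eq]
    rw [div_eq_div_iff (by positivity) (by positivity)]
    ring
  · rw [hTgt2, hd2, hnum]
    rw [div_div_div_eq]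
    rw [div_eq_div_iff (by positivity) (by positivity)]
    ring
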